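/- Let f be a nonvanishing real-valued C^1 function on an open set Ω ⊆ ℝ³. A C^1 quaternion-valued function W = W0 + W⃗ satisfies the main Vekua equation DW = (Df/f) · conj(W) on Ω if and only if div(f W⃗) = 0 and curl(f W⃗) = −f² ∇(W0/f) on Ω. -/

import Mathlib

noncomputable section

/-- ℝ³ as the function space `Fin 3 → ℝ`. -/
abbrev V3 : Type := Fin 3 → ℝ

/-- The quaternion units e₁, e₂, e₃. -/
def qe (i : Fin 3) : Quaternion ℝ :=
  ⟨0, if i = 0 then 1 else 0, if i = 1 then 1 else 0, if i = 2 then 1 else 0⟩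

/-- Embedding of a vector of ℝ³ as a purely vectorial quaternion. -/
def vecQ (v : V3) : Quaternion ℝ := ⟨0, v 0, v 1, v 2⟩

/-- Partial derivative of a quaternion-valued function. -/
def pd (i : Fin 3) (w : V3 → Quaternion ℝ) (x : V3) : Quaternion ℝ :=
  fderiv ℝ w x (Pi.single i 1)

/-- The Moisil–Teodorescu (Dirac) operator D = Σ eᵢ ∂/∂xᵢ. -/
def Dop (w : V3 → Quaternion ℝ) (x : V3) : Quaternion ℝ :=
  ∑ i : Fin 3, qe i * pd i w x

/-- Partial derivative of a real-valued function. -/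
def pdR (i : Fin 3) (u : V3 → ℝ) (x : V3) : ℝ :=
  fderiv ℝ u x (Pi.single i 1)

/-- Gradient of a scalar function. -/
def gradR (u : V3 → ℝ) (x : V3) : V3 := fun i => pdR i u x

/-- Divergence of a vector field. -/
def divg (v : V3 → V3) (x : V3) : ℝ := ∑ i : Fin 3, pdR i (fun y => v y i) x

/-- Curl of a vector field. -/
def curl (v : V3 → V3) (x : V3) : V3 :=
  ![pdR 1 (fun y => v y 2) x - pdR 2 (fun y => v y 1) x,
    pdR 2 (fun y => v y 0) x - pdR 0 (fun y => v y 2) x,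
    pdR 0 (fun y => v y 1) x - pdR 1 (fun y => v y 0) x]

/-- A quaternion built from its four components, typed as `Quaternion ℝ`. -/
def qmk (r i j k : ℝ) : Quaternion ℝ := ⟨r, i, j, k⟩

@[simp] theorem qmk_re (r i j k : ℝ) : (qmk r i j k).re = r := rfl
@[simp] theorem qmk_imI (r i j k : ℝ) : (qmk r i j k).imI = i := rfl
@[simp] theorem qmk_imJ (r i j k : ℝ) : (qmk r i j k).imJ = j := rfl
@[simp] theorem qmk_imK (r i j k : ℝ) : (qmk r i j k).imK = k := rfl
@[simp] theorem qe_re (i : Fin 3) : (qe i).re = 0 := rfl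
@[simp] theorem qe_imI (i : Fin 3) : (qe i).imI = if i = 0 then 1 else 0 := rfl
@[simp] theorem qe_imJ (i : Fin 3) : (qe i).imJ = if i = 1 then 1 else 0 := rfl
@[simp] theorem qe_imK (i : Fin 3) : (qe i).imK = if i = 2 then 1 else 0 := rfl
@[simp] theorem vecQ_re (v : V3) : (vecQ v).re = 0 := rfl
@[simp] theorem vecQ_imI (v : V3) : (vecQ v).imI = v 0 := rfl
@[simp] theorem vecQ_imJ (v : V3) : (vecQ v).imJ = v 1 := rfl
@[simp] theorem vecQ_imK (v : V3) : (vecQ v).imK = v 2 := rfl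
@[simp] theorem coeQ_add_re (r : ℝ) (q : Quaternion ℝ) :
    (((r : ℝ) : Quaternion ℝ) + q).re = r + q.re := rfl
@[simp] theorem coeQ_add_imI (r : ℝ) (q : Quaternion ℝ) :
    (((r : ℝ) : Quaternion ℝ) + q).imI = q.imI := by
  show 0 + q.imI = q.imI
  simp
@[simp] theorem coeQ_add_imJ (r : ℝ) (q : Quaternion ℝ) :
    (((r : ℝ) : Quaternion ℝ) + q).imJ = q.imJ := by
  show 0 + q.imJ = q.imJ
  simp
@[simp] theorem coeQ_add_imK (r : ℝ) (q : Quaternion ℝ) :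
    (((r : ℝ) : Quaternion ℝ) + q).imK = q.imK := by
  show 0 + q.imK = q.imK
  simp

/-- W = W0 + W⃗ (C¹) satisfies the main Vekua equation DW = (Df/f) conj(W)
    on open Ω ⊆ ℝ³ (f real-valued, nonvanishing, C¹) iff div(f W⃗) = 0 and
    curl(f W⃗) = −f² ∇(W0/f) on Ω. -/
theorem stmt8 (Ω : Set V3) (hΩ : IsOpen Ω) (f W0 : V3 → ℝ) (Wv : V3 → V3)
    (hf : ContDiffOn ℝ 1 f Ω) (hfne : ∀ x ∈ Ω, f x ≠ 0)
    (hW0 : ContDiffOn ℝ 1 W0 Ω) (hWv : ContDiffOn ℝ 1 Wv Ω) :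
    (∀ x ∈ Ω, Dop (fun y => ((W0 y : ℝ) : Quaternion ℝ) + vecQ (Wv y)) x =
        (f x)⁻¹ • (vecQ (gradR f x) * star (((W0 x : ℝ) : Quaternion ℝ) + vecQ (Wv x)))) ↔
      (∀ x ∈ Ω, divg (fun y => f y • Wv y) x = 0 ∧
        curl (fun y => f y • Wv y) x = -((f x) ^ 2 • gradR (fun z => W0 z / f z) x)) := by
  refine forall₂_congr fun x hx => ?_
  have hmem : Ω ∈ nhds x := hΩ.mem_nhds hx
  have hF : f x ≠ 0 := hfne x hx
  have hfd : DifferentiableAt ℝ f x :=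
    ((hf.differentiableOn one_ne_zero) x hx).differentiableAt hmem
  have hW0d : DifferentiableAt ℝ W0 x :=
    ((hW0.differentiableOn one_ne_zero) x hx).differentiableAt hmem
  have hWvd : DifferentiableAt ℝ Wv x :=
    ((hWv.differentiableOn one_ne_zero) x hx).differentiableAt hmem
  have hWvi : ∀ j, DifferentiableAt ℝ (fun y => Wv y j) x := differentiableAt_pi.mp hWvd
  set a : Fin 3 → ℝ := fun i => pdR i W0 x with ha
  set b : Fin 3 → Fin 3 → ℝ := fun i j => pdR i (fun y => Wv y j) x with hb
  set g : Fin 3 → ℝ := fun i => pdR i f x with hg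
  set w : Fin 3 → ℝ := Wv x with hw
  -- Step A: the partial derivatives of W
  have hpd : ∀ i, pd i (fun y => ((W0 y : ℝ) : Quaternion ℝ) + vecQ (Wv y)) x
      = qmk (a i) (b i 0) (b i 1) (b i 2) := by
    intro i
    have hrw : (fun y => ((W0 y : ℝ) : Quaternion ℝ) + vecQ (Wv y))
        = fun y => W0 y • (1 : Quaternion ℝ) +
            (Wv y 0 • qe 0 + (Wv y 1 • qe 1 + Wv y 2 • qe 2)) := by
      funext y
      ext <;> simp [Quaternion.re_one, Quaternion.imI_one, Quaternion.imJ_one,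
        Quaternion.imK_one]
    rw [pd, hrw,
      fderiv_fun_add (hW0d.smul_const _)
        (((hWvi 0).smul_const _).fun_add (((hWvi 1).smul_const _).fun_add ((hWvi 2).smul_const _))),
      fderiv_fun_add ((hWvi 0).smul_const _) (((hWvi 1).smul_const _).fun_add ((hWvi 2).smul_const _)),
      fderiv_fun_add ((hWvi 1).smul_const _) ((hWvi 2).smul_const _),
      fderiv_smul_const hW0d, fderiv_smul_const (hWvi 0), fderiv_smul_const (hWvi 1),
      fderiv_smul_const (hWvi 2)]
    simp only [ContinuousLinearMap.add_apply, ContinuousLinearMap.smulRight_apply]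
    ext <;> simp [ha, hb, pdR, Quaternion.re_one, Quaternion.imI_one, Quaternion.imJ_one,
      Quaternion.imK_one]
  -- Step B: value of Dop
  have hD : Dop (fun y => ((W0 y : ℝ) : Quaternion ℝ) + vecQ (Wv y)) x
      = qmk (-(b 0 0 + b 1 1 + b 2 2)) (a 0 + (b 1 2 - b 2 1))
          (a 1 + (b 2 0 - b 0 2)) (a 2 + (b 0 1 - b 1 0)) := by
    rw [Dop, Fin.sum_univ_three, hpd 0, hpd 1, hpd 2]
    ext <;> simp <;> ring
  -- Step C: value of the right-hand quaternion
  have hR : (f x)⁻¹ • (vecQ (gradR f x) * star (((W0 x : ℝ) : Quaternion ℝ) + vecQ (Wv x)))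
      = qmk ((f x)⁻¹ * (g 0 * w 0 + g 1 * w 1 + g 2 * w 2))
          ((f x)⁻¹ * (W0 x * g 0 - (g 1 * w 2 - g 2 * w 1)))
          ((f x)⁻¹ * (W0 x * g 1 - (g 2 * w 0 - g 0 * w 2)))
          ((f x)⁻¹ * (W0 x * g 2 - (g 0 * w 1 - g 1 * w 0))) := by
    ext <;> simp [gradR, hg, hw] <;> ring_nf <;> tauto
  -- Step D: partials of f • Wv
  have hpm : ∀ i j, pdR i (fun y => (f y • Wv y) j) x = f x * b i j + w j * g i := by
    intro i j
    have h1 : (fun y => (f y • Wv y) j) = fun y => f y * Wv y j := by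
      funext y; simp
    rw [pdR, h1, fderiv_fun_mul hfd (hWvi j)]
    simp [hb, hg, hw, pdR, smul_eq_mul, mul_comm]
  -- Step E: gradient of the quotient
  have hq : ∀ i, f x * pdR i (fun z => W0 z / f z) x = a i - (W0 x / f x) * g i := by
    have hne : ∀ᶠ y in nhds x, f y ≠ 0 := hfd.continuousAt.eventually_ne hF
    have hhd : DifferentiableAt ℝ (fun z => W0 z / f z) x := by
      simp only [div_eq_mul_inv]
      exact hW0d.mul (hfd.inv hF)
    have heq : W0 =ᶠ[nhds x] fun y => (W0 y / f y) * f y :=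
      hne.mono fun y hy => by field_simp
    have hfe : fderiv ℝ W0 x = fderiv ℝ (fun y => (W0 y / f y) * f y) x := heq.fderiv_eq
    rw [fderiv_fun_mul hhd hfd] at hfe
    intro i
    have h2 := congrArg (fun L : V3 →L[ℝ] ℝ => L (Pi.single i 1)) hfe
    simp only [ContinuousLinearMap.add_apply, ContinuousLinearMap.smul_apply,
      smul_eq_mul] at h2
    have h3 : a i = (W0 x / f x) * pdR i f x + f x * pdR i (fun z => W0 z / f z) x := by
      simpa [ha, pdR, mul_comm] using h2
    rw [h3, hg]; ring
  -- assemble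
  rw [hD, hR, Quaternion.ext_iff]
  have hdiv : divg (fun y => f y • Wv y) x
      = (f x * b 0 0 + w 0 * g 0) + (f x * b 1 1 + w 1 * g 1) + (f x * b 2 2 + w 2 * g 2) := by
    rw [divg, Fin.sum_univ_three, hpm 0 0, hpm 1 1, hpm 2 2]
  have hcurl : curl (fun y => f y • Wv y) x
      = ![(f x * b 1 2 + w 2 * g 1) - (f x * b 2 1 + w 1 * g 2),
          (f x * b 2 0 + w 0 * g 2) - (f x * b 0 2 + w 2 * g 0),
          (f x * b 0 1 + w 1 * g 0) - (f x * b 1 0 + w 0 * g 1)] := by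
    rw [curl, hpm 1 2, hpm 2 1, hpm 2 0, hpm 0 2, hpm 0 1, hpm 1 0]
  have hrhs : ∀ i, (-((f x) ^ 2 • gradR (fun z => W0 z / f z) x)) i
      = W0 x * g i - f x * a i := by
    intro i
    have h4 : (f x) ^ 2 * pdR i (fun z => W0 z / f z) x = f x * a i - W0 x * g i := by
      have h5 : (f x) ^ 2 * pdR i (fun z => W0 z / f z) x
          = f x * (f x * pdR i (fun z => W0 z / f z) x) := by ring
      rw [h5, hq i]; field_simp
    simp only [Pi.neg_apply, Pi.smul_apply, smul_eq_mul, gradR]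
    rw [h4]; ring
  have hre : -((f x) ^ 2 • gradR (fun z => W0 z / f z) x)
      = ![W0 x * g 0 - f x * a 0, W0 x * g 1 - f x * a 1, W0 x * g 2 - f x * a 2] := by
    funext i
    rw [hrhs i]
    fin_cases i <;> simp
  have hvec : ∀ (p q : Fin 3 → ℝ), p = q ↔ (p 0 = q 0 ∧ p 1 = q 1 ∧ p 2 = q 2) := by
    intro p q
    constructor
    · intro h; exact ⟨congrFun h 0, congrFun h 1, congrFun h 2⟩
    · rintro ⟨h0, h1, h2⟩
      funext i
      fin_cases i
      · exact h0
      · exact h1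
      · exact h2
  rw [hdiv, hcurl, hre, hvec]
  simp only [Matrix.cons_val_zero, Matrix.cons_val_one, Matrix.head_cons,
    Matrix.cons_val_two, Matrix.tail_cons, qmk_re, qmk_imI, qmk_imJ, qmk_imK]
  have key : ∀ (X S : ℝ), (X = (f x)⁻¹ * S ↔ f x * X = S) := fun X S =>
    eq_inv_mul_iff_mul_eq₀ hF
  rw [key, key, key, key]
  constructor
  · rintro ⟨h1, h2, h3, h4⟩
    refine ⟨by linear_combination -h1, by linear_combination h2, by linear_combination h3,
      by linear_combination h4⟩
  · rintro ⟨h1, h2, h3, h4⟩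
    refine ⟨by linear_combination -h1, by linear_combination h2, by linear_combination h3,
      by linear_combination h4⟩
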